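/- The minimum Euclidean distance between two disjoint line segments whose endpoints belong to {0,1}^d (for any d ≥ 3) is 1/√6, achieved by a diagonal of the cube [0,1]^3 and a diagonal of one of its square faces. -/

import Mathlib

set_option maxHeartbeats 1600000

lemma sum_ite_card {d : ℕ} (P : Fin d → Prop) [DecidablePred P] (x : ℝ) :
    ∑ i, (if P i then x else 0) = ((Finset.univ.filter P).card : ℝ) * x := by
  rw [← Finset.sum_filter, Finset.sum_const, nsmul_eq_mul]

lemma dist_eq' {d : ℕ} (x y : EuclideanSpace ℝ (Fin d)) :
    dist x y = Real.sqrt (∑ i, (x i - y i)^2) := by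
  rw [EuclideanSpace.dist_eq]
  congr 1
  exact Finset.sum_congr rfl fun i _ => by rw [Real.dist_eq, sq_abs]

lemma one_le_sum_sq {d : ℕ} (x y : EuclideanSpace ℝ (Fin d))
    (hx : ∀ i, x i = 0 ∨ x i = 1) (hy : ∀ i, y i = 0 ∨ y i = 1) (hne : x ≠ y) :
    1 ≤ ∑ i, (x i - y i)^2 := by
  have : ∃ i, x i ≠ y i := by
    by_contra hcon
    push_neg at hcon
    exact hne (PiLp.ext hcon)
  obtain ⟨i₀, hi₀⟩ := this
  have h1 : (1:ℝ) ≤ (x i₀ - y i₀)^2 := by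
    rcases hx i₀ with h|h <;> rcases hy i₀ with h'|h' <;> rw [h, h'] at hi₀ ⊢ <;> (try norm_num at hi₀) <;> norm_num
  calc (1:ℝ) ≤ (x i₀ - y i₀)^2 := h1
    _ ≤ ∑ i, (x i - y i)^2 :=
      Finset.single_le_sum (f := fun i => (x i - y i)^2) (fun i _ => sq_nonneg _) (Finset.mem_univ i₀)
set_option maxHeartbeats 1000000 in
lemma quadR (a b c e f g h t s : ℝ) (ha : 0 ≤ a) (hb : 0 ≤ b) (hc : 0 ≤ c)
    (he : 0 ≤ e) (hf : 0 ≤ f) (hg : 0 ≤ g) (hh : 0 ≤ h)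
    (ht0 : 0 ≤ t) (hts : t ≤ s) (hs2 : s ≤ 1/2)
    (H1 : 1 ≤ a+c+f+h) (H2 : 1 ≤ a+c+e+g) (H5 : 1 ≤ 4*a+b+c+e+f) :
    1/6 ≤ a + b*t^2 + c*(1-t)^2 + e*s^2 + f*(1-s)^2 + g*(t-s)^2 + h*(t+s-1)^2 := by
  have k1 : 0 ≤ (t+s-1)^2*(a+c+f+h-1) := mul_nonneg (sq_nonneg _) (by linarith)
  have k2 : 0 ≤ (t-s)^2*(a+c+e+g-1) := mul_nonneg (sq_nonneg _) (by linarith)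
  have k3 : 0 ≤ t^2*(4*a+b+c+e+f-1) := mul_nonneg (sq_nonneg _) (by linarith)
  have f1 : t^2 ≤ t*s := by nlinarith
  have f2 : t*s ≤ t/2 := by nlinarith
  have f3 : s^2 ≤ s/2 := by nlinarith
  have k4 : 0 ≤ a*(2*t+2*s-6*t^2-2*s^2) := mul_nonneg ha (by linarith)
  have f4 : t^2 ≤ s^2 := by nlinarith
  have k5 : 0 ≤ c*(2*s*(1-s)-2*t^2) := mul_nonneg hc (by nlinarith)
  have k6 : 0 ≤ e*(2*t*(s-t)) := mul_nonneg he (by nlinarith)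
  have k7 : 0 ≤ f*(2*t*(1-t-s)) := mul_nonneg hf (by nlinarith)
  have k8 : (0:ℝ) ≤ 3*(t-1/3)^2 + 2*(s-1/2)^2 := by positivity
  linarith [k1,k2,k3,k4,k5,k6,k7,k8]
lemma quadF (a b c e f g h t s : ℝ) (ha : 0 ≤ a) (hb : 0 ≤ b) (hc : 0 ≤ c)
    (he : 0 ≤ e) (hf : 0 ≤ f) (hg : 0 ≤ g) (hh : 0 ≤ h)
    (ht0 : 0 ≤ t) (ht1 : t ≤ 1) (hs0 : 0 ≤ s) (hs1 : s ≤ 1)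
    (H1 : 1 ≤ a+c+f+h) (H2 : 1 ≤ a+c+e+g) (H3 : 1 ≤ a+b+f+g) (H4 : 1 ≤ a+b+e+h)
    (H5 : 1 ≤ 4*a+b+c+e+f) :
    1/6 ≤ a + b*t^2 + c*(1-t)^2 + e*s^2 + f*(1-s)^2 + g*(t-s)^2 + h*(t+s-1)^2 := by
  rcases le_total t (1/2) with ht2 | ht2 <;> rcases le_total s (1/2) with hs2 | hs2
  · rcases le_total t s with hts | hts
    · have := quadR a b c e f g h t s ha hb hc he hf hg hh ht0 hts hs2
        (by linarith) (by linarith) (by linarith)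
      linarith [this]
    · have := quadR a e f b c g h s t ha he hf hb hc hg hh hs0 hts ht2
        (by linarith) (by linarith) (by linarith)
      linarith [this]
  · rcases le_total t (1-s) with hts | hts
    · have := quadR a b c f e h g t (1-s) ha hb hc hf he hh hg ht0 hts (by linarith)
        (by linarith) (by linarith) (by linarith)
      linarith [this]
    · have := quadR a f e b c h g (1-s) t ha hf he hb hc hh hg (by linarith) hts ht2
        (by linarith) (by linarith) (by linarith)
      linarith [this]
  · rcases le_total (1-t) s with hts | hts
    · have := quadR a c b e f h g (1-t) s ha hc hb he hf hh hg (by linarith) hts hs2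
        (by linarith) (by linarith) (by linarith)
      linarith [this]
    · have := quadR a e f c b h g s (1-t) ha he hf hc hb hh hg hs0 hts (by linarith)
        (by linarith) (by linarith) (by linarith)
      linarith [this]
  · rcases le_total (1-t) (1-s) with hts | hts
    · have := quadR a c b f e g h (1-t) (1-s) ha hc hb hf he hg hh (by linarith) hts (by linarith)
        (by linarith) (by linarith) (by linarith)
      linarith [this]
    · have := quadR a f e c b g h (1-s) (1-t) ha hf he hc hb hg hh (by linarith) hts (by linarith)
        (by linarith) (by linarith) (by linarith)
      linarith [this]

lemma dist_lb (d : ℕ) (u v u' v' : EuclideanSpace ℝ (Fin d))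
    (hu : ∀ i, u i = 0 ∨ u i = 1) (hv : ∀ i, v i = 0 ∨ v i = 1)
    (hu' : ∀ i, u' i = 0 ∨ u' i = 1) (hv' : ∀ i, v' i = 0 ∨ v' i = 1)
    (hdisj : segment ℝ u v ∩ segment ℝ u' v' = ∅)
    (t s : ℝ) (ht0 : 0 ≤ t) (ht1 : t ≤ 1) (hs0 : 0 ≤ s) (hs1 : s ≤ 1) :
    1/6 ≤ ∑ i, ((1-t) * u i + t * v i - ((1-s) * u' i + s * v' i))^2 := by
  classical
  have key : ∀ (t' s' : ℝ) (i : Fin d),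
      ((1-t') * u i + t' * v i - ((1-s') * u' i + s' * v' i))^2
      = (if (u i = v i ∧ u' i = v' i ∧ ¬ u i = u' i) then 1 else 0)
      + (if (¬u i = v i ∧ u' i = v' i ∧ u' i = u i) then t'^2 else 0)
      + (if (¬u i = v i ∧ u' i = v' i ∧ u' i = v i) then (1-t')^2 else 0)
      + (if (u i = v i ∧ ¬u' i = v' i ∧ u i = u' i) then s'^2 else 0)
      + (if (u i = v i ∧ ¬u' i = v' i ∧ u i = v' i) then (1-s')^2 else 0)
      + (if (¬u i = v i ∧ ¬u' i = v' i ∧ u i = u' i) then (t'-s')^2 else 0)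
      + (if (¬u i = v i ∧ ¬u' i = v' i ∧ u i = v' i) then (t'+s'-1)^2 else 0) := by
    intro t' s' i
    rcases hu i with h1|h1 <;> rcases hv i with h2|h2 <;> rcases hu' i with h3|h3 <;>
      rcases hv' i with h4|h4 <;> rw [h1,h2,h3,h4] <;> norm_num <;> ring
  set A : ℝ := ((Finset.univ.filter (fun i => u i = v i ∧ u' i = v' i ∧ ¬ u i = u' i)).card : ℝ) with hA
  set B : ℝ := ((Finset.univ.filter (fun i => ¬u i = v i ∧ u' i = v' i ∧ u' i = u i)).card : ℝ) with hB
  set C : ℝ := ((Finset.univ.filter (fun i => ¬u i = v i ∧ u' i = v' i ∧ u' i = v i)).card : ℝ) with hC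
  set E : ℝ := ((Finset.univ.filter (fun i => u i = v i ∧ ¬u' i = v' i ∧ u i = u' i)).card : ℝ) with hE
  set F : ℝ := ((Finset.univ.filter (fun i => u i = v i ∧ ¬u' i = v' i ∧ u i = v' i)).card : ℝ) with hF
  set G : ℝ := ((Finset.univ.filter (fun i => ¬u i = v i ∧ ¬u' i = v' i ∧ u i = u' i)).card : ℝ) with hG
  set H : ℝ := ((Finset.univ.filter (fun i => ¬u i = v i ∧ ¬u' i = v' i ∧ u i = v' i)).card : ℝ) with hH
  have hQ : ∀ (t' s' : ℝ), ∑ i, ((1-t') * u i + t' * v i - ((1-s') * u' i + s' * v' i))^2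
      = A + B*t'^2 + C*(1-t')^2 + E*s'^2 + F*(1-s')^2 + G*(t'-s')^2 + H*(t'+s'-1)^2 := by
    intro t' s'
    rw [Finset.sum_congr rfl (fun i _ => key t' s' i)]
    simp only [Finset.sum_add_distrib, sum_ite_card]
    ring
  have hne : ∀ x ∈ segment ℝ u v, ∀ y ∈ segment ℝ u' v', x ≠ y := by
    intro x hx y hy hxy
    exact Set.eq_empty_iff_forall_notMem.mp hdisj x ⟨hx, hxy ▸ hy⟩
  have h00 : ∑ i, (u i - u' i)^2 = A + C + F + H := by
    have h2 : ∑ i, (u i - u' i)^2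
        = ∑ i, ((1-(0:ℝ)) * u i + 0 * v i - ((1-(0:ℝ)) * u' i + 0 * v' i))^2 :=
      Finset.sum_congr rfl fun i _ => by ring
    rw [h2, hQ 0 0]; ring
  have h01 : ∑ i, (u i - v' i)^2 = A + C + E + G := by
    have h2 : ∑ i, (u i - v' i)^2
        = ∑ i, ((1-(0:ℝ)) * u i + 0 * v i - ((1-(1:ℝ)) * u' i + 1 * v' i))^2 :=
      Finset.sum_congr rfl fun i _ => by ring
    rw [h2, hQ 0 1]; ring
  have h10 : ∑ i, (v i - u' i)^2 = A + B + F + G := by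
    have h2 : ∑ i, (v i - u' i)^2
        = ∑ i, ((1-(1:ℝ)) * u i + 1 * v i - ((1-(0:ℝ)) * u' i + 0 * v' i))^2 :=
      Finset.sum_congr rfl fun i _ => by ring
    rw [h2, hQ 1 0]; ring
  have h11 : ∑ i, (v i - v' i)^2 = A + B + E + H := by
    have h2 : ∑ i, (v i - v' i)^2
        = ∑ i, ((1-(1:ℝ)) * u i + 1 * v i - ((1-(1:ℝ)) * u' i + 1 * v' i))^2 :=
      Finset.sum_congr rfl fun i _ => by ring
    rw [h2, hQ 1 1]; ring
  have H1 : 1 ≤ A + C + F + H :=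
    h00 ▸ one_le_sum_sq u u' hu hu' (hne u (left_mem_segment ℝ u v) u' (left_mem_segment ℝ u' v'))
  have H2 : 1 ≤ A + C + E + G :=
    h01 ▸ one_le_sum_sq u v' hu hv' (hne u (left_mem_segment ℝ u v) v' (right_mem_segment ℝ u' v'))
  have H3 : 1 ≤ A + B + F + G :=
    h10 ▸ one_le_sum_sq v u' hv hu' (hne v (right_mem_segment ℝ u v) u' (left_mem_segment ℝ u' v'))
  have H4 : 1 ≤ A + B + E + H :=
    h11 ▸ one_le_sum_sq v v' hv hv' (hne v (right_mem_segment ℝ u v) v' (right_mem_segment ℝ u' v'))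
  -- midpoint
  have memm : (1/2:ℝ) • u + (1/2:ℝ) • v ∈ segment ℝ u v :=
    ⟨1/2, 1/2, by norm_num, by norm_num, by norm_num, rfl⟩
  have memm' : (1/2:ℝ) • u' + (1/2:ℝ) • v' ∈ segment ℝ u' v' :=
    ⟨1/2, 1/2, by norm_num, by norm_num, by norm_num, rfl⟩
  have hmapp : ∀ i, ((1/2:ℝ) • u + (1/2:ℝ) • v) i = (u i + v i)/2 := by
    intro i; simp [PiLp.add_apply, PiLp.smul_apply]; ring
  have hmapp' : ∀ i, ((1/2:ℝ) • u' + (1/2:ℝ) • v') i = (u' i + v' i)/2 := by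
    intro i; simp [PiLp.add_apply, PiLp.smul_apply]; ring
  have hmid_ne := hne _ memm _ memm'
  have hex : ∃ i, (u i + v i)/2 ≠ (u' i + v' i)/2 := by
    by_contra hcon
    push_neg at hcon
    exact hmid_ne (PiLp.ext fun i => by rw [hmapp i, hmapp' i, hcon i])
  obtain ⟨i₀, hi₀⟩ := hex
  have hterm : (1:ℝ)/4 ≤ ((u i₀ + v i₀)/2 - (u' i₀ + v' i₀)/2)^2 := by
    rcases hu i₀ with h1|h1 <;> rcases hv i₀ with h2|h2 <;> rcases hu' i₀ with h3|h3 <;>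
      rcases hv' i₀ with h4|h4 <;> rw [h1,h2,h3,h4] at hi₀ ⊢ <;> (try norm_num at hi₀) <;> norm_num
  have h55 : ∑ i, ((u i + v i)/2 - (u' i + v' i)/2)^2 = A + (B+C+E+F)/4 := by
    have h2 : ∑ i, ((u i + v i)/2 - (u' i + v' i)/2)^2
        = ∑ i, ((1-(1/2:ℝ)) * u i + (1/2) * v i - ((1-(1/2:ℝ)) * u' i + (1/2) * v' i))^2 :=
      Finset.sum_congr rfl fun i _ => by ring
    rw [h2, hQ (1/2) (1/2)]; ring
  have hsum4 : (1:ℝ)/4 ≤ A + (B+C+E+F)/4 := by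
    rw [← h55]
    calc (1:ℝ)/4 ≤ ((u i₀ + v i₀)/2 - (u' i₀ + v' i₀)/2)^2 := hterm
      _ ≤ _ := Finset.single_le_sum
          (f := fun i => ((u i + v i)/2 - (u' i + v' i)/2)^2)
          (fun i _ => sq_nonneg _) (Finset.mem_univ i₀)
  have H5 : 1 ≤ 4*A + B + C + E + F := by linarith
  have hAnn : (0:ℝ) ≤ A := by rw [hA]; positivity
  have hBnn : (0:ℝ) ≤ B := by rw [hB]; positivity
  have hCnn : (0:ℝ) ≤ C := by rw [hC]; positivity
  have hEnn : (0:ℝ) ≤ E := by rw [hE]; positivity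
  have hFnn : (0:ℝ) ≤ F := by rw [hF]; positivity
  have hGnn : (0:ℝ) ≤ G := by rw [hG]; positivity
  have hHnn : (0:ℝ) ≤ H := by rw [hH]; positivity
  rw [hQ t s]
  exact quadF A B C E F G H t s hAnn hBnn hCnn hEnn hFnn hGnn hHnn ht0 ht1 hs0 hs1 H1 H2 H3 H4 H5

lemma lb_dist (d : ℕ) (u v u' v' : EuclideanSpace ℝ (Fin d))
    (hu : ∀ i, u i = 0 ∨ u i = 1) (hv : ∀ i, v i = 0 ∨ v i = 1)
    (hu' : ∀ i, u' i = 0 ∨ u' i = 1) (hv' : ∀ i, v' i = 0 ∨ v' i = 1)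
    (hdisj : segment ℝ u v ∩ segment ℝ u' v' = ∅) :
    ∀ x ∈ segment ℝ u v, ∀ y ∈ segment ℝ u' v', 1/Real.sqrt 6 ≤ dist x y := by
  intro x hx y hy
  obtain ⟨α, β, hα, hβ, hαβ, hx'⟩ := hx
  obtain ⟨γ, δ, hγ, hδ, hγδ, hy'⟩ := hy
  have hxi : ∀ i, x i = (1-β) * u i + β * v i := by
    intro i
    rw [← hx']
    simp only [PiLp.add_apply, PiLp.smul_apply, smul_eq_mul]
    rw [show α = 1-β by linarith]
  have hyi : ∀ i, y i = (1-δ) * u' i + δ * v' i := by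
    intro i
    rw [← hy']
    simp only [PiLp.add_apply, PiLp.smul_apply, smul_eq_mul]
    rw [show γ = 1-δ by linarith]
  have hkey : 1/6 ≤ ∑ i, (x i - y i)^2 := by
    have h := dist_lb d u v u' v' hu hv hu' hv' hdisj β δ hβ (by linarith) hδ (by linarith)
    have hsum : ∑ i, (x i - y i)^2
        = ∑ i, ((1-β) * u i + β * v i - ((1-δ) * u' i + δ * v' i))^2 :=
      Finset.sum_congr rfl fun i _ => by rw [hxi i, hyi i]
    rw [hsum]; exact h
  rw [dist_eq']
  have heq : (1:ℝ)/Real.sqrt 6 = Real.sqrt (1/6) := by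
    rw [one_div, one_div, ← Real.sqrt_inv]
  rw [heq]
  exact Real.sqrt_le_sqrt hkey

noncomputable def exU (d : ℕ) : EuclideanSpace ℝ (Fin d) := WithLp.toLp 2 (fun _ => 0)
noncomputable def exV (d : ℕ) : EuclideanSpace ℝ (Fin d) := WithLp.toLp 2 (fun i => if (i:ℕ) < 3 then 1 else 0)
noncomputable def exU' (d : ℕ) : EuclideanSpace ℝ (Fin d) := WithLp.toLp 2 (fun i => if (i:ℕ) = 0 then 1 else 0)
noncomputable def exV' (d : ℕ) : EuclideanSpace ℝ (Fin d) := WithLp.toLp 2 (fun i => if (i:ℕ) = 1 then 1 else 0)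
noncomputable def exP (d : ℕ) : EuclideanSpace ℝ (Fin d) := WithLp.toLp 2 (fun i => if (i:ℕ) < 3 then 1/3 else 0)
noncomputable def exQ (d : ℕ) : EuclideanSpace ℝ (Fin d) :=
  WithLp.toLp 2 (fun i => if (i:ℕ) = 0 ∨ (i:ℕ) = 1 then 1/2 else 0)

/-- For any d ≥ 3, the minimum Euclidean distance between two
disjoint line segments whose endpoints belong to {0,1}^d equals 1/√6. -/
theorem stmt_8 (d : ℕ) (hd : 3 ≤ d) :
    IsLeast {r : ℝ | ∃ u v u' v' : EuclideanSpace ℝ (Fin d),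
      (∀ i, u i = 0 ∨ u i = 1) ∧ (∀ i, v i = 0 ∨ v i = 1) ∧
      (∀ i, u' i = 0 ∨ u' i = 1) ∧ (∀ i, v' i = 0 ∨ v' i = 1) ∧
      u ≠ v ∧ u' ≠ v' ∧
      segment ℝ u v ∩ segment ℝ u' v' = ∅ ∧
      r = sInf (Set.image2 dist (segment ℝ u v) (segment ℝ u' v'))}
      (1 / Real.sqrt 6) := by
  have i0 : Fin d := ⟨0, by omega⟩
  have hlow : ∀ r ∈ {r : ℝ | ∃ u v u' v' : EuclideanSpace ℝ (Fin d),
      (∀ i, u i = 0 ∨ u i = 1) ∧ (∀ i, v i = 0 ∨ v i = 1) ∧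
      (∀ i, u' i = 0 ∨ u' i = 1) ∧ (∀ i, v' i = 0 ∨ v' i = 1) ∧
      u ≠ v ∧ u' ≠ v' ∧
      segment ℝ u v ∩ segment ℝ u' v' = ∅ ∧
      r = sInf (Set.image2 dist (segment ℝ u v) (segment ℝ u' v'))},
      1 / Real.sqrt 6 ≤ r := by
    rintro r ⟨u, v, u', v', hu, hv, hu', hv', huv, hu'v', hdisj, rfl⟩
    apply le_csInf
    · exact ⟨dist u u',
        Set.mem_image2_of_mem (left_mem_segment ℝ u v) (left_mem_segment ℝ u' v')⟩
    · rintro b ⟨x, hx, y, hy, rfl⟩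
      exact lb_dist d u v u' v' hu hv hu' hv' hdisj x hx y hy
  refine ⟨?_, hlow⟩
  -- membership
  have hu0 : ∀ i, exU d i = 0 ∨ exU d i = 1 := fun i => Or.inl rfl
  have hv0 : ∀ i, exV d i = 0 ∨ exV d i = 1 := by
    intro i; by_cases h : (i:ℕ) < 3 <;> simp [exV, h]
  have hu'0 : ∀ i, exU' d i = 0 ∨ exU' d i = 1 := by
    intro i; by_cases h : (i:ℕ) = 0 <;> simp [exU', h]
  have hv'0 : ∀ i, exV' d i = 0 ∨ exV' d i = 1 := by
    intro i; by_cases h : (i:ℕ) = 1 <;> simp [exV', h]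
  have hUV : exU d ≠ exV d := by
    intro hEq
    have h0 : exU d ⟨0, by omega⟩ = exV d ⟨0, by omega⟩ := by rw [hEq]
    simp [exU, exV] at h0
  have hU'V' : exU' d ≠ exV' d := by
    intro hEq
    have h0 : exU' d ⟨0, by omega⟩ = exV' d ⟨0, by omega⟩ := by rw [hEq]
    simp [exU', exV'] at h0
  have hdisjEx : segment ℝ (exU d) (exV d) ∩ segment ℝ (exU' d) (exV' d) = ∅ := by
    rw [Set.eq_empty_iff_forall_notMem]
    rintro x ⟨⟨α, β, hα, hβ, hαβ, hx'⟩, ⟨γ, δ, hγ, hδ, hγδ, hy'⟩⟩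
    have hx1 : ∀ i : Fin d, x i = β * exV d i := by
      intro i
      rw [← hx']
      simp [exU, PiLp.add_apply, PiLp.smul_apply]
    have hy1 : ∀ i : Fin d, x i = γ * exU' d i + δ * exV' d i := by
      intro i
      rw [← hy']
      simp [PiLp.add_apply, PiLp.smul_apply]
    have e2 : β = 0 := by
      have h1 := hx1 ⟨2, by omega⟩
      have h2 := hy1 ⟨2, by omega⟩
      simp [exV, exU', exV'] at h1 h2
      rw [h1] at h2; linarith
    have e0 : γ = 0 := by
      have h1 := hx1 ⟨0, by omega⟩
      have h2 := hy1 ⟨0, by omega⟩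
      simp [exV, exU', exV', e2] at h1 h2
      rw [h1] at h2; linarith
    have h1 := hx1 ⟨1, by omega⟩
    have h2 := hy1 ⟨1, by omega⟩
    simp [exV, exU', exV', e2, e0] at h1 h2
    rw [h1] at h2
    have : δ = 1 := by linarith
    rw [this] at h2; norm_num at h2
  refine ⟨exU d, exV d, exU' d, exV' d, hu0, hv0, hu'0, hv'0, hUV, hU'V', hdisjEx, ?_⟩
  -- sInf equality
  have hp : exP d ∈ segment ℝ (exU d) (exV d) := by
    refine ⟨2/3, 1/3, by norm_num, by norm_num, by norm_num, PiLp.ext fun i => ?_⟩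
    simp only [exU, exV, exP, PiLp.toLp_apply, PiLp.add_apply, PiLp.smul_apply, smul_eq_mul]
    split_ifs <;> norm_num
  have hq : exQ d ∈ segment ℝ (exU' d) (exV' d) := by
    refine ⟨1/2, 1/2, by norm_num, by norm_num, by norm_num, PiLp.ext fun i => ?_⟩
    simp only [exU', exV', exQ, PiLp.toLp_apply, PiLp.add_apply, PiLp.smul_apply, smul_eq_mul]
    split_ifs <;> first | (exfalso; omega) | norm_num
  have hdistPQ : dist (exP d) (exQ d) = 1/Real.sqrt 6 := by
    rw [dist_eq']
    have hpt : ∀ i : Fin d, (exP d i - exQ d i)^2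
        = (if i = (⟨0, by omega⟩ : Fin d) then (1/36:ℝ) else 0)
        + (if i = (⟨1, by omega⟩ : Fin d) then (1/36:ℝ) else 0)
        + (if i = (⟨2, by omega⟩ : Fin d) then (1/9:ℝ) else 0) := by
      intro i
      simp only [exP, exQ, PiLp.toLp_apply, Fin.ext_iff]
      split_ifs <;> first | (exfalso; omega) | norm_num
    rw [Finset.sum_congr rfl fun i _ => hpt i]
    rw [Finset.sum_add_distrib, Finset.sum_add_distrib]
    rw [Finset.sum_ite_eq' Finset.univ, Finset.sum_ite_eq' Finset.univ,
      Finset.sum_ite_eq' Finset.univ]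
    simp only [Finset.mem_univ, if_true]
    rw [show (1/36 : ℝ) + 1/36 + 1/9 = 1/6 by norm_num]
    rw [one_div, one_div, ← Real.sqrt_inv]
  have hBdd : BddBelow (Set.image2 dist (segment ℝ (exU d) (exV d))
      (segment ℝ (exU' d) (exV' d))) := by
    refine ⟨0, ?_⟩
    rintro b ⟨x, hx, y, hy, rfl⟩
    exact dist_nonneg
  have hle : sInf (Set.image2 dist (segment ℝ (exU d) (exV d))
      (segment ℝ (exU' d) (exV' d))) ≤ 1/Real.sqrt 6 :=
    csInf_le hBdd (Set.mem_image2.mpr ⟨exP d, hp, exQ d, hq, hdistPQ⟩)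
  have hge := hlow _ ⟨exU d, exV d, exU' d, exV' d, hu0, hv0, hu'0, hv'0, hUV, hU'V', hdisjEx, rfl⟩
  exact le_antisymm hge hle
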